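/- Let C be an abelian category in which every short exact sequence splits, and assume the derived category of C exists. Let X be an object of the derived category of C such that Hⁿ(X) = 0 for all but finitely many n ∈ ℤ. Then X is isomorphic to the finite direct sum, over the integers n with Hⁿ(X) ≠ 0, of the objects obtained by placing Hⁿ(X) in degree n (i.e. X ≅ ⨁ₙ (singleFunctor n).obj (Hⁿ(X)) ). -/

import Mathlib

open CategoryTheory Limits

namespace SplitHelper

variable {C : Type*} [Category C] [Abelian C]

/-- The complex of homologies, with zero differentials. -/
@[reducible] noncomputable def hCplx (K : CochainComplex C ℤ) : CochainComplex C ℤ where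
  X n := K.homology n
  d _ _ := 0
  shape _ _ _ := rfl
  d_comp_d' _ _ _ _ _ := by simp

lemma hCplx_d (K : CochainComplex C ℤ) (i j : ℤ) : (hCplx K).d i j = 0 := rfl

noncomputable def toH (K : CochainComplex C ℤ) (r : ∀ n, K.X n ⟶ K.cycles n)
    (hr : ∀ n, K.iCycles n ≫ r n = 𝟙 _) : K ⟶ hCplx K where
  f n := r n ≫ K.homologyπ n
  comm' i j hij := by
    dsimp [hCplx]
    rw [comp_zero, ← HomologicalComplex.toCycles_i, Category.assoc,
      reassoc_of% (hr j)]
    simp [HomologicalComplex.toCycles_comp_homologyπ]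

lemma quasiIso_toH (K : CochainComplex C ℤ) (r : ∀ n, K.X n ⟶ K.cycles n)
    (hr : ∀ n, K.iCycles n ≫ r n = 𝟙 _) : QuasiIso (toH K r hr) := by
  constructor
  intro n
  rw [quasiIsoAt_iff_isIso_homologyMap]
  let e : (hCplx K).homology n ≅ K.homology n :=
    ((hCplx K).isoHomologyπ (n - 1) n (by simp) (hCplx_d K _ _)).symm ≪≫
      ((hCplx K).iCyclesIso n (n + 1) (by simp) (hCplx_d K _ _))
  have key : HomologicalComplex.homologyMap (toH K r hr) n ≫ e.hom = 𝟙 _ := by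
    rw [← cancel_epi (K.homologyπ n)]
    dsimp [e]
    rw [HomologicalComplex.homologyπ_naturality_assoc,
      HomologicalComplex.isoHomologyπ_hom_inv_id_assoc,
      HomologicalComplex.iCyclesIso_hom, HomologicalComplex.cyclesMap_i, Category.comp_id]
    dsimp [toH]
    rw [reassoc_of% (hr n)]
  have : HomologicalComplex.homologyMap (toH K r hr) n = e.inv := by
    rw [← Iso.comp_hom_eq_id] at *
    exact key
  rw [this]; infer_instance

namespace Part2
attribute [local instance] HasFiniteBiproducts.of_hasFiniteProducts
variable {C : Type*} [Category C] [Abelian C]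

noncomputable def biprodIso (L : CochainComplex C ℤ) (hd : ∀ i j, L.d i j = 0)
    (s : Finset ℤ) (hL : ∀ n, n ∉ s → IsZero (L.X n)) :
    L ≅ ⨁ (fun n : s => (HomologicalComplex.single C (ComplexShape.up ℤ) (n : ℤ)).obj (L.X n)) where
  hom := biproduct.lift fun n => HomologicalComplex.mkHomToSingle (𝟙 (L.X n))
    (fun i _ => by rw [hd, zero_comp])
  inv := biproduct.desc fun n => HomologicalComplex.mkHomFromSingle (𝟙 (L.X n))
    (fun k _ => by rw [hd, comp_zero])
  hom_inv_id := by
    rw [biproduct.lift_desc]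
    apply HomologicalComplex.hom_ext
    intro m
    have hf : ∀ (f g : L ⟶ L) (i : ℤ), (f + g).f i = f.f i + g.f i := fun _ _ _ => rfl
    have hsum : ∀ (α : Type) [Fintype α] (f : α → (L ⟶ L)) (i : ℤ),
        (∑ a, f a).f i = ∑ a, (f a).f i := by
      intro α _ f i
      exact map_sum ((HomologicalComplex.eval C (ComplexShape.up ℤ) i).mapAddHom) f _
    rw [hsum]
    by_cases hm : m ∈ s
    · rw [Finset.sum_eq_single (⟨m, hm⟩ : s)]
      · simp [HomologicalComplex.mkHomFromSingle_f, HomologicalComplex.mkHomToSingle_f]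
      · intro b _ hb
        dsimp only [HomologicalComplex.comp_f]
        rw [(HomologicalComplex.isZero_single_obj_X (ComplexShape.up ℤ) (b : ℤ) _ m
          (fun hc => hb (Subtype.ext hc.symm))).eq_zero_of_tgt
            ((HomologicalComplex.mkHomToSingle _ _).f m), zero_comp]
      · intro h
        exact absurd (Finset.mem_univ _) h
    · have : (𝟙 L : L ⟶ L).f m = 0 := (hL m hm).eq_of_src _ _
      rw [this]
      apply Finset.sum_eq_zero
      intro b _
      dsimp only [HomologicalComplex.comp_f]
      rw [(HomologicalComplex.isZero_single_obj_X (ComplexShape.up ℤ) (b : ℤ) _ m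
        (fun hc => hm (hc ▸ b.2))).eq_zero_of_tgt
          ((HomologicalComplex.mkHomToSingle _ _).f m), zero_comp]
  inv_hom_id := by
    apply biproduct.hom_ext'
    intro n
    apply biproduct.hom_ext
    intro n'
    simp only [biproduct.ι_desc_assoc, Category.assoc, biproduct.lift_π,
      Category.comp_id, biproduct.ι_π]
    by_cases h : n = n'
    · subst h
      rw [dif_pos rfl]
      apply HomologicalComplex.hom_ext
      intro i
      by_cases hi : i = (n : ℤ)
      · subst hi
        simp [HomologicalComplex.mkHomFromSingle_f, HomologicalComplex.mkHomToSingle_f]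
      · exact (HomologicalComplex.isZero_single_obj_X _ _ _ _ hi).eq_of_src _ _
    · rw [dif_neg h]
      apply HomologicalComplex.hom_ext
      intro i
      by_cases hi : i = (n : ℤ)
      · subst hi
        refine (HomologicalComplex.isZero_single_obj_X (ComplexShape.up ℤ) _ _ _ ?_).eq_of_tgt _ _
        exact fun hc => h (Subtype.ext hc)
      · exact (HomologicalComplex.isZero_single_obj_X _ _ _ _ hi).eq_of_src _ _

end Part2

noncomputable def singleQIso (C : Type*) [Category C] [Abelian C] [HasDerivedCategory C]
    (n : ℤ) (A : C) :
    DerivedCategory.Q.obj ((HomologicalComplex.single C (ComplexShape.up ℤ) n).obj A) ≅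
      (DerivedCategory.singleFunctor C n).obj A :=
  (((SingleFunctors.evaluation _ _ n).mapIso
    (DerivedCategory.singleFunctorsPostcompQIso C)).app A).symm

end SplitHelper


/-- Let `C` be an abelian category in which every short exact sequence splits (equivalently,
every monomorphism admits a retraction).  If `X` is an object of the derived category of `C`
with `Hⁿ(X) = 0` for all but finitely many `n`, then `X` is isomorphic to the finite direct
sum, over the integers `n` with `Hⁿ(X) ≠ 0`, of the objects obtained by placing `Hⁿ(X)` in
degree `n`. -/
theorem iso_biproduct_single_homology_of_split
    (C : Type*) [Category C] [Abelian C] [HasDerivedCategory C]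
    (hsplit : ∀ (A B : C) (f : A ⟶ B), Mono f → ∃ r : B ⟶ A, f ≫ r = 𝟙 A)
    (X : DerivedCategory C)
    (hfin : Set.Finite {n : ℤ | ¬ IsZero ((DerivedCategory.homologyFunctor C n).obj X)}) :
    Nonempty (X ≅ ⨁ (fun n : hfin.toFinset =>
      (DerivedCategory.singleFunctor C (n : ℤ)).obj
        ((DerivedCategory.homologyFunctor C (n : ℤ)).obj X))) := by
  have : HasFiniteBiproducts (CochainComplex C ℤ) :=
    HasFiniteBiproducts.of_hasFiniteProducts
  have : DerivedCategory.Q.EssSurj :=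
    Localization.essSurj _ (HomologicalComplex.quasiIso C (ComplexShape.up ℤ))
  obtain ⟨K, ⟨eQ⟩⟩ : ∃ K : CochainComplex C ℤ, Nonempty (DerivedCategory.Q.obj K ≅ X) :=
    ⟨_, ⟨DerivedCategory.Q.objObjPreimageIso X⟩⟩
  choose r hr using fun n => hsplit _ _ (K.iCycles n) inferInstance
  set f := SplitHelper.toH K r hr with hfdef
  have hf : QuasiIso f := SplitHelper.quasiIso_toH K r hr
  have hQf : IsIso (DerivedCategory.Q.map f) :=
    Localization.inverts DerivedCategory.Q (HomologicalComplex.quasiIso C (ComplexShape.up ℤ)) f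
      (by rwa [HomologicalComplex.mem_quasiIso_iff])
  let e2 : ∀ n : ℤ, (DerivedCategory.homologyFunctor C n).obj X ≅ K.homology n := fun n =>
    (DerivedCategory.homologyFunctor C n).mapIso eQ.symm ≪≫
      (DerivedCategory.homologyFunctorFactors C n).app K
  have hL : ∀ n, n ∉ hfin.toFinset → IsZero ((SplitHelper.hCplx K).X n) := by
    intro n hn
    rw [Set.Finite.mem_toFinset] at hn
    simp only [Set.mem_setOf_eq, not_not] at hn
    exact ((e2 n).isZero_iff).1 hn
  exact ⟨eQ.symm ≪≫ asIso (DerivedCategory.Q.map f) ≪≫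
    DerivedCategory.Q.mapIso (SplitHelper.Part2.biprodIso (SplitHelper.hCplx K)
      (fun _ _ => rfl) hfin.toFinset hL) ≪≫
    DerivedCategory.Q.mapBiproduct _ ≪≫
    biproduct.mapIso (fun n =>
      SplitHelper.singleQIso C (n : ℤ) _ ≪≫
        (DerivedCategory.singleFunctor C (n : ℤ)).mapIso (e2 (n : ℤ)).symm)⟩
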